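/- Let ν₁, ν₂, h > 0 and set σ = ν₂/ν₁, b = 1/ν₁, a = −ν₂²/h², r = h²/(ν₁·ν₂). If (X, Y, Z) : ℝ → ℝ³ is differentiable and satisfies the Rabinovich system Ẋ = h·Y − ν₁·X − Y·Z, Ẏ = h·X − ν₂·Y + X·Z, Ż = −Z + X·Y, then the functions x(t) = ν₁⁻¹·Y(t/ν₁), y(t) = ν₁⁻¹·ν₂⁻¹·h·X(t/ν₁), z(t) = ν₁⁻¹·ν₂⁻¹·h·Z(t/ν₁) satisfy the Lorenz-like system with parameters (r, σ, b, a); moreover these parameters satisfy a < 0 and σ = −a·r. -/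

import Mathlib

/-- The change of variables `x(t) = ν₁⁻¹·Y(t/ν₁)`, `y(t) = ν₁⁻¹·ν₂⁻¹·h·X(t/ν₁)`,
`z(t) = ν₁⁻¹·ν₂⁻¹·h·Z(t/ν₁)` transforms the Rabinovich system into the
Lorenz-like system with parameters `r = h²/(ν₁ν₂)`, `σ = ν₂/ν₁`, `b = 1/ν₁`,
`a = −ν₂²/h²`, and these parameters satisfy `a < 0`, `σ = −a·r`. -/
theorem stmt_1 (ν₁ ν₂ h : ℝ) (hν₁ : 0 < ν₁) (hν₂ : 0 < ν₂) (hh : 0 < h)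
    (σ b a r : ℝ)
    (hσ : σ = ν₂ / ν₁) (hb : b = 1 / ν₁) (ha : a = -(ν₂ ^ 2) / h ^ 2)
    (hr : r = h ^ 2 / (ν₁ * ν₂))
    (X Y Z : ℝ → ℝ)
    (hX : ∀ t, HasDerivAt X (h * Y t - ν₁ * X t - Y t * Z t) t)
    (hY : ∀ t, HasDerivAt Y (h * X t - ν₂ * Y t + X t * Z t) t)
    (hZ : ∀ t, HasDerivAt Z (-Z t + X t * Y t) t) :
    (∀ t, HasDerivAt (fun s => ν₁⁻¹ * Y (s / ν₁))
      (-σ * (ν₁⁻¹ * Y (t / ν₁) - ν₁⁻¹ * ν₂⁻¹ * h * X (t / ν₁))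
        - a * (ν₁⁻¹ * ν₂⁻¹ * h * X (t / ν₁)) * (ν₁⁻¹ * ν₂⁻¹ * h * Z (t / ν₁))) t) ∧
    (∀ t, HasDerivAt (fun s => ν₁⁻¹ * ν₂⁻¹ * h * X (s / ν₁))
      (r * (ν₁⁻¹ * Y (t / ν₁)) - ν₁⁻¹ * ν₂⁻¹ * h * X (t / ν₁)
        - (ν₁⁻¹ * Y (t / ν₁)) * (ν₁⁻¹ * ν₂⁻¹ * h * Z (t / ν₁))) t) ∧
    (∀ t, HasDerivAt (fun s => ν₁⁻¹ * ν₂⁻¹ * h * Z (s / ν₁))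
      (-b * (ν₁⁻¹ * ν₂⁻¹ * h * Z (t / ν₁))
        + (ν₁⁻¹ * Y (t / ν₁)) * (ν₁⁻¹ * ν₂⁻¹ * h * X (t / ν₁))) t) ∧
    a < 0 ∧ σ = -a * r := by
  have hd : ∀ t : ℝ, HasDerivAt (fun s : ℝ => s / ν₁) (ν₁⁻¹) t := by
    intro t
    simpa using (hasDerivAt_id t).div_const ν₁
  refine ⟨?_, ?_, ?_, ?_, ?_⟩
  · intro t
    have := (((hY (t / ν₁)).comp t (hd t)).const_mul ν₁⁻¹)
    convert this using 1
    · rfl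
    · rfl
    · rfl
    subst hσ ha
    field_simp
    ring
  · intro t
    have := (((hX (t / ν₁)).comp t (hd t)).const_mul (ν₁⁻¹ * ν₂⁻¹ * h))
    convert this using 1
    · rfl
    · rfl
    · rfl
    subst hr
    field_simp
  · intro t
    have := (((hZ (t / ν₁)).comp t (hd t)).const_mul (ν₁⁻¹ * ν₂⁻¹ * h))
    convert this using 1
    · rfl
    · rfl
    · rfl
    subst hb
    field_simp
  · rw [ha]; exact div_neg_of_neg_of_pos (by nlinarith) (by positivity)
  · subst hσ ha hr; field_simp
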